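/- Let R be a ring, {G_1,…,G_s} pairwise non-isomorphic finite groups, and ω(B) ≤ Aut(B) for each group B. Assume |FRep_ω(G_i, G_i)| is not a zero divisor in R for each i. If a_1,…,a_s ∈ R satisfy Σ_i a_i·|Rep_ω(A, G_i)| = 0 for every finite group A, then a_1 = … = a_s = 0. -/

import Mathlib

/-- The `ω`-orbit equivalence (post-composition by automorphisms in `ω`)
on `Hom(A,B)`. -/
def repSetoid (A B : Type*) [Group A] [Group B] (ω : Subgroup (MulAut B)) :
    Setoid (A →* B) where
  r f g := ∃ θ ∈ ω, (θ : MulAut B).toMonoidHom.comp f = g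
  iseqv := by
    refine ⟨fun f => ⟨1, one_mem ω, by ext a; simp⟩, ?_, ?_⟩
    · rintro f g ⟨θ, hθ, rfl⟩
      exact ⟨θ⁻¹, inv_mem hθ, by ext a; simp⟩
    · rintro f g h ⟨θ, hθ, rfl⟩ ⟨σ, hσ, rfl⟩
      exact ⟨σ * θ, mul_mem hσ hθ, by ext a; simp⟩

/-- The `ω`-orbit equivalence (post-composition by automorphisms in `ω`)
on `Mono(C,B)`. -/
def frepSetoid (C B : Type*) [Group C] [Group B] (ω : Subgroup (MulAut B)) :
    Setoid {g : C →* B // Function.Injective g} where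
  r f g := ∃ θ ∈ ω, (θ : MulAut B).toMonoidHom.comp f.1 = g.1
  iseqv := by
    refine ⟨fun f => ⟨1, one_mem ω, by ext a; simp⟩, ?_, ?_⟩
    · rintro ⟨f, hf⟩ ⟨g, hg⟩ ⟨θ, hθ, h⟩
      exact ⟨θ⁻¹, inv_mem hθ, by rw [← h]; ext a; simp⟩
    · rintro ⟨f, hf⟩ ⟨g, hg⟩ ⟨k, hk⟩ ⟨θ, hθ, h⟩ ⟨σ, hσ, h'⟩
      exact ⟨σ * θ, mul_mem hσ hθ, by rw [← h', ← h]; ext a; simp⟩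


section RepAux

private lemma finiteHom (A B : Type) [Group A] [Group B] [Finite A] [Finite B] :
    Finite (A →* B) := Finite.of_injective (fun f => (f : A → B)) DFunLike.coe_injective

private lemma finite_frepQ (C B : Type) [Group C] [Group B] [Finite C] [Finite B]
    (ω : Subgroup (MulAut B)) : Finite (Quotient (frepSetoid C B ω)) := by
  haveI := finiteHom C B
  exact Quotient.finite _

/-- `FRep` cardinality is invariant under isomorphism of the source. -/
private lemma frep_card_congr {A A' B : Type} [Group A] [Group A'] [Group B]
    (ω : Subgroup (MulAut B)) (e : A ≃* A') :
    Nat.card (Quotient (frepSetoid A B ω)) = Nat.card (Quotient (frepSetoid A' B ω)) := by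
  apply Nat.card_congr
  refine Quotient.congr
    (⟨fun f => ⟨f.1.comp e.symm.toMonoidHom, f.2.comp e.symm.injective⟩,
      fun f => ⟨f.1.comp e.toMonoidHom, f.2.comp e.injective⟩, ?_, ?_⟩) ?_
  · rintro ⟨f, hf⟩
    refine Subtype.ext (MonoidHom.ext fun x => ?_)
    simp
  · rintro ⟨f, hf⟩
    refine Subtype.ext (MonoidHom.ext fun x => ?_)
    simp
  · rintro ⟨f, hf⟩ ⟨g, hg⟩
    constructor
    · rintro ⟨θ, hθ, hc⟩
      refine ⟨θ, hθ, MonoidHom.ext fun x => ?_⟩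
      simpa using DFunLike.congr_fun hc (e.symm x)
    · rintro ⟨θ, hθ, hc⟩
      refine ⟨θ, hθ, MonoidHom.ext fun x => ?_⟩
      simpa using DFunLike.congr_fun hc (e x)

/-- The `FRep` quotient of `A ⧸ N` with the normality hypothesis made explicit. -/
private abbrev FrepQ (A B : Type) [Group A] [Group B] (ω : Subgroup (MulAut B))
    (N : Subgroup A) (hN : N.Normal) : Type :=
  Quotient (@frepSetoid (A ⧸ N) B (@QuotientGroup.Quotient.group A _ N hN) _ ω)

/-- From a mono out of a quotient of `A`, produce a representation class of `A`. -/
private def sigmaToRep {A B : Type} [Group A] [Group B] (ω : Subgroup (MulAut B))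
    (p : Σ N : {N : Subgroup A // N.Normal}, FrepQ A B ω N.1 N.2) :
    Quotient (repSetoid A B ω) := by
  letI := p.1.2
  refine Quotient.lift
    (fun g => (⟦g.1.comp (QuotientGroup.mk' p.1.1)⟧ : Quotient (repSetoid A B ω))) ?_ p.2
  rintro ⟨g, hg⟩ ⟨g', hg'⟩ ⟨θ, hθ, hc⟩
  exact Quotient.sound ⟨θ, hθ, by rw [← MonoidHom.comp_assoc, hc]⟩

private lemma sigmaToRep_bijective {A B : Type} [Group A] [Group B]
    (ω : Subgroup (MulAut B)) : Function.Bijective (sigmaToRep (A := A) (B := B) ω) := by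
  constructor
  · rintro ⟨⟨N, hN⟩, q⟩ ⟨⟨M, hM⟩, q'⟩ hpq
    letI := hN; letI := hM
    obtain ⟨⟨g, hg⟩, rfl⟩ := q.exists_rep
    obtain ⟨⟨g', hg'⟩, rfl⟩ := q'.exists_rep
    obtain ⟨θ, hθ, hc⟩ := Quotient.exact hpq
    have hcx : ∀ x : A, (θ : MulAut B) (g ((QuotientGroup.mk' N) x))
        = g' ((QuotientGroup.mk' M) x) := fun x => DFunLike.congr_fun hc x
    have hNM : N = M := by
      ext x
      constructor
      · intro hx
        have h1 : (QuotientGroup.mk' N) x = 1 := by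
          simpa [QuotientGroup.eq_one_iff] using hx
        have h2 : g' ((QuotientGroup.mk' M) x) = 1 := by
          rw [← hcx x, h1, map_one, map_one]
        have h3 : (QuotientGroup.mk' M) x = 1 := hg' (by rw [h2, map_one])
        simpa [QuotientGroup.eq_one_iff] using h3
      · intro hx
        have h1 : (QuotientGroup.mk' M) x = 1 := by
          simpa [QuotientGroup.eq_one_iff] using hx
        have h2 : (θ : MulAut B) (g ((QuotientGroup.mk' N) x)) = 1 := by
          rw [hcx x, h1, map_one]
        have h3 : g ((QuotientGroup.mk' N) x) = 1 :=
          (θ : MulAut B).injective (by rw [h2, map_one])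
        have h4 : (QuotientGroup.mk' N) x = 1 := hg (by rw [h3, map_one])
        simpa [QuotientGroup.eq_one_iff] using h4
    subst hNM
    have hprf : hN = hM := rfl
    subst hprf
    refine congrArg _ (Quotient.sound ⟨θ, hθ, ?_⟩)
    have hc' : ((θ : MulAut B).toMonoidHom.comp g).comp (QuotientGroup.mk' N)
        = g'.comp (QuotientGroup.mk' N) := by
      rw [MonoidHom.comp_assoc]; exact hc
    exact (MonoidHom.cancel_right (QuotientGroup.mk'_surjective N)).mp hc'
  · intro q
    obtain ⟨f, rfl⟩ := q.exists_rep
    refine ⟨⟨⟨f.ker, inferInstance⟩,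
      ⟦⟨QuotientGroup.kerLift f, QuotientGroup.kerLift_injective f⟩⟧⟩, ?_⟩
    exact congrArg _ (MonoidHom.ext fun x => QuotientGroup.kerLift_mk f x)

/-- The decomposition `|Rep(A,B)| = Σ_{N ◁ A} |FRep(A/N, B)|`. -/
private lemma rep_card_eq_sum {A B : Type} [Group A] [Group B] [Finite A] [Finite B]
    (ω : Subgroup (MulAut B)) [Fintype {N : Subgroup A // N.Normal}] :
    Nat.card (Quotient (repSetoid A B ω)) =
      ∑ N : {N : Subgroup A // N.Normal}, Nat.card (FrepQ A B ω N.1 N.2) := by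
  rw [← Nat.card_congr (Equiv.ofBijective _ (sigmaToRep_bijective (A := A) (B := B) ω))]
  haveI : ∀ N : {N : Subgroup A // N.Normal}, Finite (FrepQ A B ω N.1 N.2) := by
    intro N
    letI := N.2
    exact finite_frepQ (A ⧸ N.1) B ω
  haveI := fun N : {N : Subgroup A // N.Normal} => Fintype.ofFinite (FrepQ A B ω N.1 N.2)
  simp [Nat.card_eq_fintype_card]

private lemma quot_lt_card {G : Type} [Group G] [Finite G] (N : Subgroup G) [N.Normal]
    (h : N ≠ ⊥) : Nat.card (G ⧸ N) < Nat.card G := by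
  rw [Subgroup.card_eq_card_quotient_mul_card_subgroup N]
  have h1 : 1 < Nat.card N := N.one_lt_card_iff_ne_bot.mpr h
  have h2 : 0 < Nat.card (G ⧸ N) := Nat.card_pos
  nlinarith

private lemma frep_sum_zero {R : Type*} [Ring R] {s : ℕ} (G : Fin s → Type)
    [∀ i, Group (G i)] [∀ i, Finite (G i)]
    (ω : (B : Type) → [inst : Group B] → Subgroup (MulAut B)) (a : Fin s → R)
    (h : ∀ (A : Type) [Group A] [Finite A],
      ∑ i, a i * (Nat.card (Quotient (repSetoid A (G i) (ω (G i)))) : R) = 0) :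
    ∀ (n : ℕ) (A : Type) [Group A] [Finite A], Nat.card A ≤ n →
      ∑ i, a i * (Nat.card (Quotient (frepSetoid A (G i) (ω (G i)))) : R) = 0 := by
  intro n
  induction n with
  | zero =>
    intro A _ _ hA
    exact absurd hA (by have := Nat.card_pos (α := A); omega)
  | succ n ih =>
    intro A _ _ hA
    classical
    haveI : Fintype {N : Subgroup A // N.Normal} := Fintype.ofFinite _
    have hrep := h A
    have hrw : ∀ i, (Nat.card (Quotient (repSetoid A (G i) (ω (G i)))) : R)
        = ∑ N : {N : Subgroup A // N.Normal},
            (Nat.card (FrepQ A (G i) (ω (G i)) N.1 N.2) : R) := by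
      intro i
      rw [rep_card_eq_sum (ω (G i))]
      push_cast
      rfl
    simp only [hrw, Finset.mul_sum] at hrep
    rw [Finset.sum_comm] at hrep
    set bot : {N : Subgroup A // N.Normal} := ⟨⊥, inferInstance⟩ with hbotdef
    rw [← Finset.add_sum_erase _ _ (Finset.mem_univ bot)] at hrep
    have hzero : ∀ N ∈ Finset.univ.erase bot,
        (∑ i, a i * (Nat.card (FrepQ A (G i) (ω (G i)) N.1 N.2) : R)) = 0 := by
      intro N hNmem
      have hNe : N.1 ≠ ⊥ := by
        intro hcon
        exact (Finset.mem_erase.mp hNmem).1 (Subtype.ext hcon)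
      letI := N.2
      have hlt : Nat.card (A ⧸ N.1) ≤ n := by
        have := quot_lt_card N.1 hNe
        omega
      exact ih (A ⧸ N.1) hlt
    rw [Finset.sum_eq_zero hzero, add_zero] at hrep
    have hbotcard : ∀ i, Nat.card (FrepQ A (G i) (ω (G i)) bot.1 bot.2)
        = Nat.card (Quotient (frepSetoid A (G i) (ω (G i)))) := fun i =>
      frep_card_congr (ω (G i)) (QuotientGroup.quotientBot (G := A))
    simpa only [hbotcard] using hrep

end RepAux

/-- If `G_1, …, G_s` are pairwise non-isomorphic finite groups such that each
`|FRep_ω(G_i, G_i)|` is not a zero divisor in `R`, and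
`Σ_i a_i·|Rep_ω(A, G_i)| = 0` for every finite group `A`, then all `a_i = 0`. -/
theorem coeffs_vanish_of_rep_vanish {R : Type*} [Ring R] {s : ℕ}
    (G : Fin s → Type) [∀ i, Group (G i)] [∀ i, Finite (G i)]
    (hpairwise : ∀ i j, i ≠ j → ¬Nonempty (G i ≃* G j))
    (ω : (B : Type) → [inst : Group B] → Subgroup (MulAut B))
    (hnzd : ∀ i, ∀ r : R,
      r * (Nat.card (Quotient (frepSetoid (G i) (G i) (ω (G i)))) : R) = 0 → r = 0)
    (a : Fin s → R)
    (h : ∀ (A : Type) [Group A] [Finite A],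
      ∑ i, a i * (Nat.card (Quotient (repSetoid A (G i) (ω (G i)))) : R) = 0) :
    ∀ i, a i = 0 := by
  classical
  have hb : ∀ (A : Type) [Group A] [Finite A],
      ∑ i, a i * (Nat.card (Quotient (frepSetoid A (G i) (ω (G i)))) : R) = 0 := by
    intro A _ _
    exact frep_sum_zero G ω a h (Nat.card A) A le_rfl
  set M : ℕ := Finset.univ.sup (fun j => Nat.card (G j)) with hM
  have hle : ∀ j, Nat.card (G j) ≤ M := fun j =>
    Finset.le_sup (f := fun j => Nat.card (G j)) (Finset.mem_univ j)
  have key : ∀ (n : ℕ) (i : Fin s), M - Nat.card (G i) < n → a i = 0 := by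
    intro n
    induction n with
    | zero => intro i hi; omega
    | succ n ih =>
      intro i hi
      have hbi := hb (G i)
      rw [Finset.sum_eq_single_of_mem i (Finset.mem_univ i) ?side] at hbi
      · exact hnzd i (a i) hbi
      · intro j _ hji
        by_cases hmono : Nonempty {g : G i →* G j // Function.Injective g}
        · obtain ⟨⟨g, hg⟩⟩ := hmono
          have hcardle : Nat.card (G i) ≤ Nat.card (G j) :=
            Nat.card_le_card_of_injective g hg
          have hcardne : Nat.card (G i) ≠ Nat.card (G j) := by
            intro hceq
            have hbij : Function.Bijective g :=
              (Nat.bijective_iff_injective_and_card g).mpr ⟨hg, hceq⟩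
            exact hpairwise i j (Ne.symm hji) ⟨MulEquiv.ofBijective g hbij⟩
          have haj : a j = 0 := by
            refine ih j ?_
            have := hle j
            omega
          rw [haj, zero_mul]
        · haveI : IsEmpty {g : G i →* G j // Function.Injective g} :=
            ⟨fun g => hmono ⟨g⟩⟩
          haveI : IsEmpty (Quotient (frepSetoid (G i) (G j) (ω (G j)))) :=
            ⟨fun q => Quotient.ind (motive := fun _ => False) (fun g => IsEmpty.false g) q⟩
          rw [Nat.card_of_isEmpty, Nat.cast_zero, mul_zero]
  intro i
  exact key (M - Nat.card (G i) + 1) i (by omega)
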